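/- For k ≥ 2 and n ≥ binom(k,2) + 2k, the graph K̂_n^{(k,k)} (the complete graph on v₁,…,v_n with the edges inside {v₁,…,v_k} and inside {v_{n−k+1},…,v_n} subdivided) has difference index D(K̂_n^{(k,k)}) ≥ n − 2k/3 − 1. In particular, D(K̂_n^{(k,k)}) ≥ ⌈S(K̂_n^{(k,k)})/2⌉ + k/3 − 1, where S(K̂_n^{(k,k)}) = 2n − 2k − 1 is the sum index. -/

import Mathlib

open SimpleGraph

/-- The subdivided pairs of `K̂_n^{(k,k)}` (0-indexed): pairs `i < j` with both among
the first `k` vertices, or both among the last `k` vertices. -/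
def subPairs (n k : ℕ) : Type :=
  {p : Fin n × Fin n // p.1 < p.2 ∧ (((p.2 : ℕ) < k) ∨ (n - k ≤ (p.1 : ℕ)))}

instance (n k : ℕ) : Fintype (subPairs n k) := by unfold subPairs; infer_instance

/-- `K̂_n^{(k,k)}`: the complete graph on `v₀,…,v_{n-1}` with every edge inside the first
`k` vertices and every edge inside the last `k` vertices subdivided. -/
def hatKkk (n k : ℕ) : SimpleGraph (Fin n ⊕ subPairs n k) :=
  SimpleGraph.fromRel (fun a b =>
    match a, b with
    | Sum.inl i, Sum.inl j =>
        ¬(((i : ℕ) < k ∧ (j : ℕ) < k) ∨ (n - k ≤ (i : ℕ) ∧ n - k ≤ (j : ℕ)))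
    | Sum.inl i, Sum.inr p => i = p.1.1 ∨ i = p.1.2
    | Sum.inr _, Sum.inl _ => False
    | Sum.inr _, Sum.inr _ => False)

open Finset

lemma adj_mm {n k : ℕ} {i j : Fin n} :
    (hatKkk n k).Adj (Sum.inl i) (Sum.inl j) ↔
      i ≠ j ∧ ¬(((i : ℕ) < k ∧ (j : ℕ) < k) ∨ (n - k ≤ (i : ℕ) ∧ n - k ≤ (j : ℕ))) := by
  constructor
  · rintro ⟨hne, h | h⟩ <;> refine ⟨fun he => hne (by rw [he]), ?_⟩
    · exact h
    · tauto
  · rintro ⟨hne, h⟩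
    exact ⟨fun he => hne (Sum.inl_injective he), Or.inl h⟩

lemma adj_mx {n k : ℕ} {i : Fin n} {p : subPairs n k} :
    (hatKkk n k).Adj (Sum.inl i) (Sum.inr p) ↔ (i = p.1.1 ∨ i = p.1.2) := by
  constructor
  · rintro ⟨hne, h | h⟩
    · exact h
    · exact h.elim
  · intro h
    exact ⟨by simp, Or.inl h⟩

lemma not_adj_xx {n k : ℕ} {p q : subPairs n k} :
    ¬ (hatKkk n k).Adj (Sum.inr p) (Sum.inr q) := by
  rintro ⟨hne, h | h⟩ <;> exact h

/-- card of a Finset of achieved differences bounds ncard of the value set -/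
lemma finset_card_le_ncard {V : Type*} [Fintype V] (g : V × V → ℤ) (S : Set ℤ)
    (hS : ∀ s ∈ S, ∃ uv, g uv = s) (I : Finset ℤ) (hI : ↑I ⊆ S) : I.card ≤ S.ncard := by
  have hfin : S.Finite := by
    refine Set.Finite.subset (Set.finite_range g) ?_
    intro s hs
    obtain ⟨uv, huv⟩ := hS s hs
    exact ⟨uv, huv⟩
  calc I.card = (↑I : Set ℤ).ncard := (Set.ncard_coe_finset I).symm
  _ ≤ S.ncard := Set.ncard_le_ncard hI hfin

lemma diffset_range {V : Type*} [Fintype V] (G : SimpleGraph V) (f : V → ℤ) :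
    ∀ s ∈ {s : ℤ | ∃ u v, G.Adj u v ∧ s = |f u - f v|}, ∃ uv : V × V, |f uv.1 - f uv.2| = s := by
  rintro s ⟨u, v, _, rfl⟩; exact ⟨(u, v), rfl⟩

lemma chain_lower (n k : ℕ) (hk : 2 ≤ k) (hn : 2 * k < n)
    (P Q : Fin n → Prop) [DecidablePred P] [DecidablePred Q]
    (hadj : ∀ i j : Fin n, i ≠ j → ¬(P i ∧ P j) → ¬(Q i ∧ Q j) →
      (hatKkk n k).Adj (Sum.inl i) (Sum.inl j))
    (hPQ : ∀ i, ¬(P i ∧ Q i))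
    (hPcard : (Finset.univ.filter P).card ≤ k)
    (hQcard : (Finset.univ.filter Q).card ≤ k)
    (f : (Fin n ⊕ subPairs n k) → ℤ) (hf : Function.Injective f)
    (M : Fin n) (hM : ∀ v, f (Sum.inl v) ≤ f (Sum.inl M)) (hPM : P M) :
    n - 1 - k / 2 ≤ {s : ℤ | ∃ u v, (hatKkk n k).Adj u v ∧ s = |f u - f v|}.ncard := by
  set S := {s : ℤ | ∃ u v, (hatKkk n k).Adj u v ∧ s = |f u - f v|} with hSdef
  set a : Fin n → ℤ := fun v => f (Sum.inl v) with hadef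
  have ha : Function.Injective a := fun v w h => Sum.inl_injective (hf h)
  -- free vertex
  obtain ⟨w₀, hPw₀, hQw₀⟩ : ∃ w₀ : Fin n, ¬ P w₀ ∧ ¬ Q w₀ := by
    by_contra h
    push_neg at h
    have hsub : (univ : Finset (Fin n)) ⊆ univ.filter P ∪ univ.filter Q := by
      intro v _
      by_cases hv : P v
      · exact mem_union_left _ (mem_filter.2 ⟨mem_univ _, hv⟩)
      · exact mem_union_right _ (mem_filter.2 ⟨mem_univ _, h v hv⟩)
    have := card_le_card hsub
    rw [card_univ, Fintype.card_fin] at this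
    have := this.trans ((card_union_le _ _).trans (Nat.add_le_add hPcard hQcard))
    omega
  have hQM : ¬ Q M := fun h => hPQ M ⟨hPM, h⟩
  have hw₀M : w₀ ≠ M := fun h => hPw₀ (h ▸ hPM)
  have haw₀M : a w₀ < a M := lt_of_le_of_ne (hM w₀) (fun h => hw₀M (ha h))
  set B := univ.filter (fun v => a v < a w₀) with hBdef
  set C := univ.filter (fun v => a w₀ < a v) with hCdef
  have hMC : M ∈ C := mem_filter.2 ⟨mem_univ _, haw₀M⟩
  have hBC : B.card + C.card + 1 = n := by
    have hdisj : Disjoint B C := by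
      rw [Finset.disjoint_left]
      intro v hv hv'
      exact absurd ((mem_filter.1 hv).2.trans (mem_filter.1 hv').2) (lt_irrefl _)
    have hun : B ∪ C = univ.erase w₀ := by
      ext v
      simp only [hBdef, hCdef, mem_union, mem_filter, mem_univ, true_and, mem_erase, and_true]
      constructor
      · rintro (h | h) he <;> subst he <;> exact lt_irrefl _ h
      · intro h
        exact lt_or_gt_of_ne (fun he => h (ha he))
    have := card_union_of_disjoint hdisj
    rw [hun, card_erase_of_mem (mem_univ _), card_univ, Fintype.card_fin] at this
    omega
  set y := (B.filter P).card with hydef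
  set x := (C.filter P).card with hxdef
  have hxy : x + y ≤ k := by
    have hdisj : Disjoint (C.filter P) (B.filter P) := by
      rw [Finset.disjoint_left]
      intro v hv hv'
      exact absurd ((mem_filter.1 (mem_filter.1 hv').1).2.trans
        (mem_filter.1 (mem_filter.1 hv).1).2) (lt_irrefl _)
    have hsub : C.filter P ∪ B.filter P ⊆ univ.filter P := by
      intro v hv
      rcases mem_union.1 hv with h | h <;>
        exact mem_filter.2 ⟨mem_univ _, (mem_filter.1 h).2⟩
    have := (card_union_of_disjoint hdisj) ▸ card_le_card hsub
    exact le_trans (le_of_eq rfl) (this.trans hPcard)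

  by_cases hy : y ≤ k / 2
  · -- chain P' : pairs (v,M) for v below w₀ with ¬P v, and (w₀,w) for w above w₀
    set I₁ := (B.filter (fun v => ¬ P v)).image (fun v => a M - a v) with hI1
    set I₂ := C.image (fun v => a v - a w₀) with hI2
    have hinj1 : Set.InjOn (fun v => a M - a v) ↑(B.filter (fun v => ¬ P v)) := by
      intro v _ w _ h
      simp only at h
      exact ha (by omega)
    have hinj2 : Set.InjOn (fun v => a v - a w₀) ↑C := by
      intro v _ w _ h
      simp only at h
      exact ha (by omega)
    have hI₁card : I₁.card = B.card - y := by
      rw [hI1, card_image_of_injOn hinj1]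
      have := card_filter_add_card_filter_not (s := B) (p := P)
      omega
    have hI₂card : I₂.card = C.card := by rw [hI2, card_image_of_injOn hinj2]
    have hdisj : Disjoint I₁ I₂ := by
      rw [Finset.disjoint_left]
      intro s hs hs'
      obtain ⟨v, hv, rfl⟩ := mem_image.1 hs
      obtain ⟨w, hw, heq⟩ := mem_image.1 hs'
      have h1 : a v < a w₀ := (mem_filter.1 (mem_filter.1 hv).1).2
      have h2 : a w ≤ a M := hM w
      omega
    have hsub : ↑(I₁ ∪ I₂) ⊆ S := by
      intro s hs
      rcases mem_union.1 (by exact_mod_cast hs) with h | h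
      · obtain ⟨v, hv, rfl⟩ := mem_image.1 h
        have hvP : ¬ P v := (mem_filter.1 hv).2
        have hvlt : a v < a w₀ := (mem_filter.1 (mem_filter.1 hv).1).2
        have hne : v ≠ M := fun h => by subst h; exact hvP hPM
        refine ⟨Sum.inl M, Sum.inl v, (hadj v M hne (fun h => hvP h.1) (fun h => hQM h.2)).symm, ?_⟩
        rw [show f (Sum.inl M) = a M from rfl, show f (Sum.inl v) = a v from rfl,
          abs_of_nonneg (sub_nonneg.2 (hM v))]
      · obtain ⟨v, hv, rfl⟩ := mem_image.1 h
        have hvgt : a w₀ < a v := (mem_filter.1 hv).2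
        have hne : v ≠ w₀ := fun h => by subst h; exact lt_irrefl _ hvgt
        refine ⟨Sum.inl v, Sum.inl w₀, hadj v w₀ hne (fun h => hPw₀ h.2) (fun h => hQw₀ h.2), ?_⟩
        rw [show f (Sum.inl v) = a v from rfl, show f (Sum.inl w₀) = a w₀ from rfl,
          abs_of_nonneg (sub_nonneg.2 (le_of_lt hvgt))]
    have hle := finset_card_le_ncard (fun uv => |f uv.1 - f uv.2|) S (diffset_range _ f) _ hsub
    rw [card_union_of_disjoint hdisj, hI₁card, hI₂card] at hle
    have hyB : y ≤ B.card := card_filter_le _ _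
    omega

  · -- chain3
    push_neg at hy
    have hx : x ≤ k / 2 := by omega
    set T := univ.filter P with hTdef
    have hTBne : (B.filter P).Nonempty := by
      rw [← card_pos]; omega
    obtain ⟨t₀, ht₀⟩ := hTBne
    have ht₀T : t₀ ∈ T := mem_filter.2 ⟨mem_univ _, (mem_filter.1 ht₀).2⟩
    obtain ⟨u, huT, hu⟩ := T.exists_min_image a ⟨t₀, ht₀T⟩
    have hPu : P u := (mem_filter.1 huT).2
    have hQu : ¬ Q u := fun h => hPQ u ⟨hPu, h⟩
    have hau : a u < a w₀ :=
      lt_of_le_of_lt (hu t₀ ht₀T) (mem_filter.1 (mem_filter.1 ht₀).1).2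
    have hauM : a u ≤ a M := hM u
    set D1 := univ.filter (fun v => a v < a u) with hD1def
    set Cw := univ.filter (fun v => a w₀ ≤ a v) with hCwdef
    set D2 := Cw.filter (fun v => ¬ P v) with hD2def
    set D3 := univ.filter (fun v => a u < a v ∧ a v < a w₀) with hD3def
    have hCwP : Cw.filter P = C.filter P := by
      ext v
      simp only [hCwdef, hCdef, mem_filter, mem_univ, true_and]
      constructor
      · rintro ⟨hle, hP⟩
        rcases eq_or_lt_of_le hle with he | hlt
        · exact absurd hP (by rw [← ha he]; exact hPw₀)
        · exact ⟨hlt, hP⟩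
      · rintro ⟨hlt, hP⟩
        exact ⟨le_of_lt hlt, hP⟩
    have hD2card : D2.card = Cw.card - x := by
      have := card_filter_add_card_filter_not (s := Cw) (p := P)
      rw [hCwP] at this
      rw [hD2def]
      omega
    have hxCw : x ≤ Cw.card := by
      rw [← hCwP] at hxdef
      exact hxdef ▸ card_filter_le _ _
    -- partition : D1.card + D3.card + 1 + Cw.card = n
    have hpart : D1.card + D3.card + 1 + Cw.card = n := by
      have hBeq : B = univ.filter (fun v => ¬ a w₀ ≤ a v) := by
        ext v; simp [hBdef, not_le]
      have h1 : Cw.card + B.card = n := by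
        have := card_filter_add_card_filter_not (s := (univ : Finset (Fin n)))
          (p := fun v => a w₀ ≤ a v)
        rw [← hBeq] at this
        rwa [card_univ, Fintype.card_fin] at this
      have h2 : B.filter (fun v => a v < a u) = D1 := by
        ext v
        simp only [hBdef, hD1def, mem_filter, mem_univ, true_and]
        exact ⟨fun h => h.2, fun h => ⟨h.trans hau, h⟩⟩
      have h3 : B.filter (fun v => ¬ a v < a u) = insert u D3 := by
        ext v
        simp only [hBdef, hD3def, mem_filter, mem_univ, true_and, mem_insert, not_lt]
        constructor
        · rintro ⟨hvw, huv⟩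
          rcases eq_or_lt_of_le huv with he | hlt
          · exact Or.inl (ha he.symm)
          · exact Or.inr ⟨hlt, hvw⟩
        · rintro (rfl | ⟨h1', h2'⟩)
          · exact ⟨hau, le_refl _⟩
          · exact ⟨h2', le_of_lt h1'⟩
      have h4 : u ∉ D3 := fun h => lt_irrefl _ (mem_filter.1 h).2.1
      have h5 := card_filter_add_card_filter_not (s := B) (p := fun v => a v < a u)
      rw [h2, h3, card_insert_of_notMem h4] at h5
      omega
    set I₁ := D1.image (fun v => a M - a v) with hI1
    set I₂ := D2.image (fun v => a v - a u) with hI2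
    set I₃ := D3.image (fun v => a w₀ - a v) with hI3
    have hI₁card : I₁.card = D1.card := card_image_of_injOn (by
      intro v _ w _ h; simp only at h; exact ha (by omega))
    have hI₂card : I₂.card = D2.card := card_image_of_injOn (by
      intro v _ w _ h; simp only at h; exact ha (by omega))
    have hI₃card : I₃.card = D3.card := card_image_of_injOn (by
      intro v _ w _ h; simp only at h; exact ha (by omega))
    -- value ranges
    have hr1 : ∀ s ∈ I₁, a M - a u < s := by
      intro s hs
      obtain ⟨v, hv, rfl⟩ := mem_image.1 hs
      have : a v < a u := (mem_filter.1 hv).2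
      omega
    have hr2 : ∀ s ∈ I₂, a w₀ - a u ≤ s ∧ s < a M - a u := by
      intro s hs
      obtain ⟨v, hv, rfl⟩ := mem_image.1 hs
      have h1' : a w₀ ≤ a v := (mem_filter.1 (mem_filter.1 hv).1).2
      have h2' : ¬ P v := (mem_filter.1 hv).2
      have hvM : v ≠ M := fun h => by subst h; exact h2' hPM
      have : a v < a M := lt_of_le_of_ne (hM v) (fun h => hvM (ha h))
      omega
    have hr3 : ∀ s ∈ I₃, s < a w₀ - a u := by
      intro s hs
      obtain ⟨v, hv, rfl⟩ := mem_image.1 hs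
      have : a u < a v := (mem_filter.1 hv).2.1
      omega
    have hd12 : Disjoint I₁ I₂ := by
      rw [Finset.disjoint_left]
      intro s hs hs'
      exact absurd (hr1 s hs) (not_lt.2 (le_of_lt (hr2 s hs').2))
    have hd13 : Disjoint I₁ I₃ := by
      rw [Finset.disjoint_left]
      intro s hs hs'
      have := hr1 s hs
      have := hr3 s hs'
      omega
    have hd23 : Disjoint I₂ I₃ := by
      rw [Finset.disjoint_left]
      intro s hs hs'
      have := hr2 s hs
      have := hr3 s hs'
      omega
    have hsub : ↑(I₁ ∪ I₂ ∪ I₃) ⊆ S := by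
      intro s hs
      rcases mem_union.1 (by exact_mod_cast hs) with h | h
      · rcases mem_union.1 h with h' | h'
        · obtain ⟨v, hv, rfl⟩ := mem_image.1 h'
          have hvu : a v < a u := (mem_filter.1 hv).2
          have hvP : ¬ P v := fun hP =>
            absurd (hu v (mem_filter.2 ⟨mem_univ _, hP⟩)) (not_le.2 hvu)
          have hne : v ≠ M := fun h => by subst h; exact hvP hPM
          refine ⟨Sum.inl M, Sum.inl v,
            (hadj v M hne (fun h => hvP h.1) (fun h => hQM h.2)).symm, ?_⟩
          rw [show f (Sum.inl M) = a M from rfl, show f (Sum.inl v) = a v from rfl,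
            abs_of_nonneg (sub_nonneg.2 (hM v))]
        · obtain ⟨v, hv, rfl⟩ := mem_image.1 h'
          have h1' : a w₀ ≤ a v := (mem_filter.1 (mem_filter.1 hv).1).2
          have h2' : ¬ P v := (mem_filter.1 hv).2
          have hne : v ≠ u := fun h => by subst h; omega
          refine ⟨Sum.inl v, Sum.inl u,
            hadj v u hne (fun h => h2' h.1) (fun h => hQu h.2), ?_⟩
          rw [show f (Sum.inl v) = a v from rfl, show f (Sum.inl u) = a u from rfl,
            abs_of_nonneg (by omega)]
      · obtain ⟨v, hv, rfl⟩ := mem_image.1 h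
        have h1' : a u < a v := (mem_filter.1 hv).2.1
        have h2' : a v < a w₀ := (mem_filter.1 hv).2.2
        have hne : v ≠ w₀ := fun h => by subst h; exact lt_irrefl _ h2'
        refine ⟨Sum.inl w₀, Sum.inl v,
          (hadj v w₀ hne (fun h => hPw₀ h.2) (fun h => hQw₀ h.2)).symm, ?_⟩
        rw [show f (Sum.inl w₀) = a w₀ from rfl, show f (Sum.inl v) = a v from rfl,
          abs_of_nonneg (by omega)]
    have hle := finset_card_le_ncard (fun uv => |f uv.1 - f uv.2|) S (diffset_range _ f) _ hsub
    rw [card_union_of_disjoint (disjoint_union_left.2 ⟨hd13, hd23⟩),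
      card_union_of_disjoint hd12, hI₁card, hI₂card, hI₃card, hD2card] at hle
    clear_value S a B C y x T D1 Cw D2 D3 I₁ I₂ I₃
    omega

lemma card_bot_le (n k : ℕ) :
    (Finset.univ.filter (fun i : Fin n => (i : ℕ) < k)).card ≤ k := by
  have := Finset.card_le_card_of_injOn
    (s := Finset.univ.filter (fun i : Fin n => (i : ℕ) < k))
    (f := fun i : Fin n => (i : ℕ))
    (t := Finset.range k)
    (fun i hi => Finset.mem_range.2 (Finset.mem_filter.1 hi).2)
    (fun i _ j _ h => Fin.ext h)
  simpa using this

lemma card_top_le (n k : ℕ) :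
    (Finset.univ.filter (fun i : Fin n => n - k ≤ (i : ℕ))).card ≤ k := by
  have := Finset.card_le_card_of_injOn
    (s := Finset.univ.filter (fun i : Fin n => n - k ≤ (i : ℕ)))
    (f := fun i : Fin n => (i : ℕ) - (n - k))
    (t := Finset.range k)
    (fun i hi => by
      have h1 := (Finset.mem_filter.1 hi).2
      have h2 := i.isLt
      show (i : ℕ) - (n - k) ∈ Finset.range k
      exact Finset.mem_range.2 (by omega))
    (fun i hi j hj h => by
      have h1 := (Finset.mem_filter.1 hi).2
      have h2 := (Finset.mem_filter.1 hj).2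
      have h3 : (i : ℕ) - (n - k) = (j : ℕ) - (n - k) := h
      exact Fin.ext (by omega))
  simpa using this

lemma diff_lower (n k : ℕ) (hk : 2 ≤ k) (hn : 2 * k < n)
    (f : (Fin n ⊕ subPairs n k) → ℤ) (hf : Function.Injective f) :
    n - 1 - k / 2 ≤ {s : ℤ | ∃ u v, (hatKkk n k).Adj u v ∧ s = |f u - f v|}.ncard := by
  obtain ⟨M, _, hM'⟩ := Finset.exists_max_image Finset.univ (fun v => f (Sum.inl v))
    ⟨⟨0, by omega⟩, Finset.mem_univ _⟩
  have hM : ∀ v, f (Sum.inl v) ≤ f (Sum.inl M) := fun v => hM' v (Finset.mem_univ v)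
  by_cases hbot : (M : ℕ) < k
  · refine chain_lower n k hk hn (fun i => (i : ℕ) < k) (fun i => n - k ≤ (i : ℕ))
      (fun i j hne h1 h2 => adj_mm.2 ⟨hne, by tauto⟩)
      (fun i hi => by omega)
      (card_bot_le n k) (card_top_le n k) f hf M hM hbot
  · by_cases htop : n - k ≤ (M : ℕ)
    · refine chain_lower n k hk hn (fun i => n - k ≤ (i : ℕ)) (fun i => (i : ℕ) < k)
        (fun i j hne h1 h2 => adj_mm.2 ⟨hne, by tauto⟩)
        (fun i hi => by omega)
        (card_top_le n k) (card_bot_le n k) f hf M hM htop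
    · -- M is free : full star
      set S := {s : ℤ | ∃ u v, (hatKkk n k).Adj u v ∧ s = |f u - f v|} with hSdef
      set a : Fin n → ℤ := fun v => f (Sum.inl v) with hadef
      have ha : Function.Injective a := fun v w h => Sum.inl_injective (hf h)
      set I := (Finset.univ.erase M).image (fun v => a M - a v) with hI
      have hIcard : I.card = n - 1 := by
        rw [hI, Finset.card_image_of_injOn (fun v _ w _ h => ha (by omega)),
          Finset.card_erase_of_mem (Finset.mem_univ _), Finset.card_univ, Fintype.card_fin]
      have hsub : ↑I ⊆ S := by
        intro s hs
        obtain ⟨v, hv, rfl⟩ := Finset.mem_image.1 (by exact_mod_cast hs)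
        have hne : v ≠ M := Finset.ne_of_mem_erase hv
        refine ⟨Sum.inl M, Sum.inl v,
          (adj_mm.2 ⟨hne, by tauto⟩).symm, ?_⟩
        rw [show f (Sum.inl M) = a M from rfl, show f (Sum.inl v) = a v from rfl,
          abs_of_nonneg (sub_nonneg.2 (hM v))]
      have hle := finset_card_le_ncard (fun uv => |f uv.1 - f uv.2|) S (diffset_range _ f) _ hsub
      rw [hIcard] at hle
      omega

lemma sumset_range {V : Type*} [Fintype V] (G : SimpleGraph V) (f : V → ℤ) :
    ∀ s ∈ {s : ℤ | ∃ u v, G.Adj u v ∧ s = f u + f v}, ∃ uv : V × V, f uv.1 + f uv.2 = s := by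
  rintro s ⟨u, v, _, rfl⟩; exact ⟨(u, v), rfl⟩

lemma sum_lower (n k : ℕ) (hk : 2 ≤ k) (hn : 2 * k < n)
    (f : (Fin n ⊕ subPairs n k) → ℤ) (hf : Function.Injective f) :
    2 * n - 2 * k - 1 ≤ {s : ℤ | ∃ u v, (hatKkk n k).Adj u v ∧ s = f u + f v}.ncard := by
  set S := {s : ℤ | ∃ u v, (hatKkk n k).Adj u v ∧ s = f u + f v} with hSdef
  set a : Fin n → ℤ := fun v => f (Sum.inl v) with hadef
  have ha : Function.Injective a := fun v w h => Sum.inl_injective (hf h)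
  obtain ⟨M, _, hM'⟩ := Finset.exists_max_image Finset.univ a ⟨⟨0, by omega⟩, Finset.mem_univ _⟩
  obtain ⟨m, _, hm'⟩ := Finset.exists_min_image Finset.univ a ⟨⟨0, by omega⟩, Finset.mem_univ _⟩
  have hM : ∀ v, a v ≤ a M := fun v => hM' v (Finset.mem_univ v)
  have hm : ∀ v, a m ≤ a v := fun v => hm' v (Finset.mem_univ v)
  have hmM : a m < a M := by
    rcases lt_or_ge (a m) (a M) with h | h
    · exact h
    · exfalso
      have hconst : ∀ v, a v = a M := fun v => le_antisymm (hM v) (le_trans h (hm v))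
      have h0 : ((⟨0, by omega⟩ : Fin n) : ℕ) = ((⟨1, by omega⟩ : Fin n) : ℕ) := by
        have := ha ((hconst ⟨0, by omega⟩).trans (hconst ⟨1, by omega⟩).symm)
        exact congrArg Fin.val this
      simp at h0
  -- neighbour sets
  have key : ∀ w : Fin n, ∃ Aw : Finset (Fin n),
      (∀ v ∈ Aw, (hatKkk n k).Adj (Sum.inl w) (Sum.inl v)) ∧ n - k ≤ Aw.card := by
    intro w
    refine ⟨Finset.univ.filter (fun v => w ≠ v ∧
      ¬(((w : ℕ) < k ∧ (v : ℕ) < k) ∨ (n - k ≤ (w : ℕ) ∧ n - k ≤ (v : ℕ)))), ?_, ?_⟩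
    · intro v hv
      exact adj_mm.2 (Finset.mem_filter.1 hv).2
    · have hcompl : (Finset.univ.filter (fun v => ¬(w ≠ v ∧
          ¬(((w : ℕ) < k ∧ (v : ℕ) < k) ∨ (n - k ≤ (w : ℕ) ∧ n - k ≤ (v : ℕ)))))).card ≤ k := by
        by_cases hwb : (w : ℕ) < k
        · refine le_trans (Finset.card_le_card ?_) (card_bot_le n k)
          intro v hv
          have h1 := (Finset.mem_filter.1 hv).2
          refine Finset.mem_filter.2 ⟨Finset.mem_univ _, ?_⟩
          by_cases hvm : w = v
          · omega
          · push_neg at h1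
            rcases h1 hvm with ⟨h2, h3⟩ | ⟨h2, h3⟩
            · omega
            · omega
        · by_cases hwt : n - k ≤ (w : ℕ)
          · refine le_trans (Finset.card_le_card ?_) (card_top_le n k)
            intro v hv
            have h1 := (Finset.mem_filter.1 hv).2
            refine Finset.mem_filter.2 ⟨Finset.mem_univ _, ?_⟩
            by_cases hvm : w = v
            · omega
            · push_neg at h1
              rcases h1 hvm with ⟨h2, h3⟩ | ⟨h2, h3⟩
              · omega
              · omega
          · refine le_trans (Finset.card_le_card (t := {w}) ?_) (by simp; omega)
            intro v hv
            have h1 := (Finset.mem_filter.1 hv).2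
            push_neg at h1
            by_cases hvm : w = v
            · simp [hvm]
            · rcases h1 hvm with ⟨h2, h3⟩ | ⟨h2, h3⟩
              · omega
              · omega
      have := Finset.card_filter_add_card_filter_not
        (s := (Finset.univ : Finset (Fin n))) (p := fun v => w ≠ v ∧
          ¬(((w : ℕ) < k ∧ (v : ℕ) < k) ∨ (n - k ≤ (w : ℕ) ∧ n - k ≤ (v : ℕ))))
      rw [Finset.card_univ, Fintype.card_fin] at this
      omega
  obtain ⟨Am, hAmAdj, hAmcard⟩ := key m
  obtain ⟨AM, hAMAdj, hAMcard⟩ := key M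
  set Im := Am.image (fun v => a m + a v) with hIm
  set IM := AM.image (fun v => a M + a v) with hIM
  have hImcard : Im.card = Am.card := Finset.card_image_of_injOn
    (fun v _ w _ h => ha (by omega))
  have hIMcard : IM.card = AM.card := Finset.card_image_of_injOn
    (fun v _ w _ h => ha (by omega))
  have hinter : (Im ∩ IM).card ≤ 1 := by
    refine le_trans (Finset.card_le_card (t := {a m + a M}) ?_) (by simp)
    intro s hs
    obtain ⟨hs1, hs2⟩ := Finset.mem_inter.1 hs
    obtain ⟨v, _, hv⟩ := Finset.mem_image.1 hs1
    obtain ⟨w, _, hw⟩ := Finset.mem_image.1 hs2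
    have h1 : a v ≤ a M := hM v
    have h2 : a m ≤ a w := hm w
    have : s = a m + a M := by omega
    simp [this]
  have hsub : ↑(Im ∪ IM) ⊆ S := by
    intro s hs
    rcases Finset.mem_union.1 (by exact_mod_cast hs) with h | h
    · obtain ⟨v, hv, rfl⟩ := Finset.mem_image.1 h
      exact ⟨Sum.inl m, Sum.inl v, hAmAdj v hv, rfl⟩
    · obtain ⟨v, hv, rfl⟩ := Finset.mem_image.1 h
      exact ⟨Sum.inl M, Sum.inl v, hAMAdj v hv, rfl⟩
  have hle := finset_card_le_ncard (fun uv => f uv.1 + f uv.2) S (sumset_range _ f) _ hsub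
  have hun := Finset.card_union_add_card_inter Im IM
  omega

def enc (i j : ℕ) : ℕ := i + j.choose 2

lemma enc_succ (j : ℕ) : (j + 1).choose 2 = j.choose 2 + j := by
  rw [Nat.choose_succ_succ]
  simp [Nat.choose_one_right, Nat.add_comm]

lemma enc_lt {i j m : ℕ} (hij : i < j) (hjm : j < m) : enc i j < m.choose 2 := by
  have h1 : enc i j < (j + 1).choose 2 := by
    rw [enc_succ]; unfold enc; omega
  exact lt_of_lt_of_le h1 (Nat.choose_le_choose 2 hjm)

lemma enc_inj {i j i' j' : ℕ} (h1 : i < j) (h2 : i' < j') (he : enc i j = enc i' j') :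
    i = i' ∧ j = j' := by
  rcases lt_trichotomy j j' with h | h | h
  · exfalso
    have := enc_lt h1 h
    have h3 : j'.choose 2 ≤ enc i' j' := Nat.le_add_left _ _
    omega
  · subst h
    unfold enc at he
    omega
  · exfalso
    have := enc_lt h2 h
    have h3 : j.choose 2 ≤ enc i j := Nat.le_add_left _ _
    omega

lemma sum_upper (n k : ℕ) (hk : 2 ≤ k) (hn : k.choose 2 + 2 * k ≤ n) :
    ∃ f : (Fin n ⊕ subPairs n k) → ℤ, Function.Injective f ∧
      {s : ℤ | ∃ u v, (hatKkk n k).Adj u v ∧ s = f u + f v}.ncard = 2 * n - 2 * k - 1 := by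
  set C := k.choose 2 with hC
  have hC1 : 1 ≤ C := by
    have : Nat.choose 2 2 ≤ Nat.choose k 2 := Nat.choose_le_choose 2 hk
    simpa [hC] using this
  have hnk : 2 * k < n := by omega
  -- the labelling
  set f : (Fin n ⊕ subPairs n k) → ℤ := Sum.elim (fun i => ((i : ℕ) : ℤ) + 1)
    (fun p => if ((p.1.2 : ℕ) < k) then ((n : ℕ) : ℤ) + 1 + (enc (p.1.1 : ℕ) (p.1.2 : ℕ) : ℤ)
      else - ((enc ((p.1.1 : ℕ) - (n - k)) ((p.1.2 : ℕ) - (n - k)) : ℕ) : ℤ)) with hfdef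
  -- basic bounds for subdivision vertices
  have hxval : ∀ p : subPairs n k,
      (((p.1.2 : ℕ) < k) ∧ (p.1.1 : ℕ) < (p.1.2 : ℕ) ∧
        f (Sum.inr p) = ((n : ℕ) : ℤ) + 1 + (enc (p.1.1 : ℕ) (p.1.2 : ℕ) : ℤ) ∧
        (enc (p.1.1 : ℕ) (p.1.2 : ℕ)) < C) ∨
      ((n - k ≤ (p.1.1 : ℕ)) ∧ (p.1.1 : ℕ) < (p.1.2 : ℕ) ∧
        f (Sum.inr p) = - ((enc ((p.1.1 : ℕ) - (n - k)) ((p.1.2 : ℕ) - (n - k)) : ℕ) : ℤ) ∧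
        (enc ((p.1.1 : ℕ) - (n - k)) ((p.1.2 : ℕ) - (n - k))) < C) := by
    intro p
    obtain ⟨hlt, hor⟩ := p.2
    have hlt' : (p.1.1 : ℕ) < (p.1.2 : ℕ) := hlt
    by_cases hb : (p.1.2 : ℕ) < k
    · left
      refine ⟨hb, hlt', ?_, enc_lt hlt' hb⟩
      simp [hfdef, hb]
    · right
      have htop : n - k ≤ (p.1.1 : ℕ) := by tauto
      have h2 := p.1.2.isLt
      refine ⟨htop, hlt', ?_, enc_lt (by omega) (by omega)⟩
      simp [hfdef, hb]
  have hinj : Function.Injective f := by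
    intro u v huv
    rcases u with i | p <;> rcases v with j | q
    · have : ((i : ℕ) : ℤ) + 1 = ((j : ℕ) : ℤ) + 1 := huv
      exact congrArg Sum.inl (Fin.ext (by omega))
    · exfalso
      have hi : f (Sum.inl i) = ((i : ℕ) : ℤ) + 1 := rfl
      have h2 := i.isLt
      rcases hxval q with ⟨_, _, he, hlt⟩ | ⟨_, _, he, hlt⟩ <;> rw [hi, he] at huv <;> omega
    · exfalso
      have hj : f (Sum.inl j) = ((j : ℕ) : ℤ) + 1 := rfl
      have h2 := j.isLt
      rcases hxval p with ⟨_, _, he, hlt⟩ | ⟨_, _, he, hlt⟩ <;> rw [hj, he] at huv <;> omega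
    · congr 1
      rcases hxval p with ⟨hb1, hl1, he1, hlt1⟩ | ⟨ht1, hl1, he1, hlt1⟩ <;>
        rcases hxval q with ⟨hb2, hl2, he2, hlt2⟩ | ⟨ht2, hl2, he2, hlt2⟩ <;>
          rw [he1, he2] at huv
      · have : enc (p.1.1 : ℕ) (p.1.2 : ℕ) = enc (q.1.1 : ℕ) (q.1.2 : ℕ) := by omega
        obtain ⟨e1, e2⟩ := enc_inj hl1 hl2 this
        exact Subtype.ext (Prod.ext (Fin.ext e1) (Fin.ext e2))
      · omega
      · omega
      · have h1 := p.1.2.isLt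
        have h2 := q.1.2.isLt
        have : enc ((p.1.1 : ℕ) - (n - k)) ((p.1.2 : ℕ) - (n - k)) =
            enc ((q.1.1 : ℕ) - (n - k)) ((q.1.2 : ℕ) - (n - k)) := by omega
        obtain ⟨e1, e2⟩ := enc_inj (by omega) (by omega) this
        exact Subtype.ext (Prod.ext (Fin.ext (by omega)) (Fin.ext (by omega)))
  refine ⟨f, hinj, ?_⟩
  have hset : {s : ℤ | ∃ u v, (hatKkk n k).Adj u v ∧ s = f u + f v} =
      ↑(Finset.Icc ((k : ℤ) + 2) (2 * (n : ℤ) - k)) := by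
    ext s
    simp only [Finset.coe_Icc, Set.mem_Icc, Set.mem_setOf_eq]
    constructor
    · rintro ⟨u, v, hadj, rfl⟩
      rcases u with i | p <;> rcases v with j | q
      · obtain ⟨hne, hcond⟩ := adj_mm.1 hadj
        have hne' : (i : ℕ) ≠ (j : ℕ) := fun h => hne (Fin.ext h)
        push_neg at hcond
        have h1 := i.isLt
        have h2 := j.isLt
        have hi : f (Sum.inl i) = ((i : ℕ) : ℤ) + 1 := rfl
        have hj : f (Sum.inl j) = ((j : ℕ) : ℤ) + 1 := rfl
        rw [hi, hj]
        constructor <;> [skip; skip] <;> omega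
      · have hiq := adj_mx.1 hadj
        have hi : f (Sum.inl i) = ((i : ℕ) : ℤ) + 1 := rfl
        have hival : (i : ℕ) = (q.1.1 : ℕ) ∨ (i : ℕ) = (q.1.2 : ℕ) := by
          rcases hiq with h | h <;> [left; right] <;> rw [h]
        have h2 := i.isLt
        rcases hxval q with ⟨hb, hl, he, hlt⟩ | ⟨ht, hl, he, hlt⟩ <;> rw [hi, he] <;>
          constructor <;> omega
      · have hiq := adj_mx.1 hadj.symm
        have hj : f (Sum.inl j) = ((j : ℕ) : ℤ) + 1 := rfl
        have hival : (j : ℕ) = (p.1.1 : ℕ) ∨ (j : ℕ) = (p.1.2 : ℕ) := by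
          rcases hiq with h | h <;> [left; right] <;> rw [h]
        have h2 := j.isLt
        rcases hxval p with ⟨hb, hl, he, hlt⟩ | ⟨ht, hl, he, hlt⟩ <;> rw [hj, he] <;>
          constructor <;> omega
      · exact absurd hadj not_adj_xx
    · rintro ⟨hlo, hhi⟩
      have hs0 : 0 ≤ s := by omega
      set t := s.toNat with ht
      have hts : (t : ℤ) = s := Int.toNat_of_nonneg hs0
      by_cases hcase : t ≤ n + 1
      · have htk : k + 2 ≤ t := by omega
        refine ⟨Sum.inl (⟨0, by omega⟩ : Fin n), Sum.inl (⟨t - 2, by omega⟩ : Fin n), ?_, ?_⟩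
        · refine adj_mm.2 ⟨?_, ?_⟩
          · intro h
            have h' : (0 : ℕ) = t - 2 := congrArg Fin.val h
            omega
          · have e1 : ((⟨0, by omega⟩ : Fin n) : ℕ) = 0 := rfl
            have e2 : ((⟨t - 2, by omega⟩ : Fin n) : ℕ) = t - 2 := rfl
            rw [e1, e2]
            rintro (⟨h1, h2⟩ | ⟨h1, h2⟩) <;> omega
        · have e1 : f (Sum.inl (⟨0, by omega⟩ : Fin n)) = ((0 : ℕ) : ℤ) + 1 := rfl
          have e2 : f (Sum.inl (⟨t - 2, by omega⟩ : Fin n)) = ((t - 2 : ℕ) : ℤ) + 1 := rfl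
          rw [e1, e2]
          omega
      · have htk : n + 2 ≤ t ∧ t ≤ 2 * n - k := by omega
        refine ⟨Sum.inl (⟨t - n - 1, by omega⟩ : Fin n),
          Sum.inl (⟨n - 1, by omega⟩ : Fin n), ?_, ?_⟩
        · refine adj_mm.2 ⟨?_, ?_⟩
          · intro h
            have h' : (t - n - 1 : ℕ) = n - 1 := congrArg Fin.val h
            omega
          · have e1 : ((⟨t - n - 1, by omega⟩ : Fin n) : ℕ) = t - n - 1 := rfl
            have e2 : ((⟨n - 1, by omega⟩ : Fin n) : ℕ) = n - 1 := rfl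
            rw [e1, e2]
            rintro (⟨h1, h2⟩ | ⟨h1, h2⟩) <;> omega
        · have e1 : f (Sum.inl (⟨t - n - 1, by omega⟩ : Fin n)) = ((t - n - 1 : ℕ) : ℤ) + 1 := rfl
          have e2 : f (Sum.inl (⟨n - 1, by omega⟩ : Fin n)) = ((n - 1 : ℕ) : ℤ) + 1 := rfl
          rw [e1, e2]
          omega
  rw [hset, Set.ncard_coe_finset, Int.card_Icc]
  omega

/-- The sum index of a finite simple graph. -/
noncomputable def sumIndex {V : Type*} [Fintype V] (G : SimpleGraph V) : ℕ :=
  sInf {n | ∃ f : V → ℤ, Function.Injective f ∧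
    {s : ℤ | ∃ u v, G.Adj u v ∧ s = f u + f v}.ncard = n}

/-- The difference index of a finite simple graph. -/
noncomputable def diffIndex {V : Type*} [Fintype V] (G : SimpleGraph V) : ℕ :=
  sInf {n | ∃ f : V → ℤ, Function.Injective f ∧
    {s : ℤ | ∃ u v, G.Adj u v ∧ s = |f u - f v|}.ncard = n}

/-- For `k ≥ 2` and `n ≥ C(k,2) + 2k`, the difference index of
`K̂_n^{(k,k)}` is at least `n - 2k/3 - 1`; in particular it is at least
`⌈S(K̂_n^{(k,k)})/2⌉ + k/3 - 1`, where the sum index is `S(K̂_n^{(k,k)}) = 2n - 2k - 1`. -/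
theorem stmt13 (n k : ℕ) (hk : 2 ≤ k) (hn : k.choose 2 + 2 * k ≤ n) :
    (n : ℝ) - 2 * k / 3 - 1 ≤ (diffIndex (hatKkk n k) : ℝ) ∧
    sumIndex (hatKkk n k) = 2 * n - 2 * k - 1 ∧
    (⌈(sumIndex (hatKkk n k) : ℝ) / 2⌉ : ℝ) + k / 3 - 1 ≤ (diffIndex (hatKkk n k) : ℝ) := by
  have hC1 : 1 ≤ k.choose 2 := by
    have := Nat.choose_le_choose 2 hk
    simpa using this
  have hnk : 2 * k < n := by omega
  have hSval : sumIndex (hatKkk n k) = 2 * n - 2 * k - 1 := by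
    unfold sumIndex
    apply le_antisymm
    · obtain ⟨f, hf, hc⟩ := sum_upper n k hk hn
      exact Nat.sInf_le ⟨f, hf, hc⟩
    · apply le_csInf
      · obtain ⟨f, hf, hc⟩ := sum_upper n k hk hn
        exact ⟨_, f, hf, hc⟩
      · rintro c ⟨f, hf, hc⟩
        exact hc ▸ sum_lower n k hk hnk f hf
  have hDval : n - 1 - k / 2 ≤ diffIndex (hatKkk n k) := by
    unfold diffIndex
    have hne : {m | ∃ f : (Fin n ⊕ subPairs n k) → ℤ, Function.Injective f ∧
        {s : ℤ | ∃ u v, (hatKkk n k).Adj u v ∧ s = |f u - f v|}.ncard = m}.Nonempty := by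
      obtain ⟨f, hf, _⟩ := sum_upper n k hk hn
      exact ⟨_, f, hf, rfl⟩
    obtain ⟨f, hf, hc⟩ := Nat.sInf_mem hne
    exact hc ▸ diff_lower n k hk hnk f hf
  have hcast : ((n - 1 - k / 2 : ℕ) : ℝ) = (n : ℝ) - 1 - ((k / 2 : ℕ) : ℝ) := by
    have h1 : (n - 1 - k / 2 : ℕ) + (1 + k / 2) = n := by omega
    have h2 := congrArg (fun m : ℕ => (m : ℝ)) h1
    push_cast at h2
    linarith
  have hk2 : ((k / 2 : ℕ) : ℝ) ≤ 2 * (k : ℝ) / 3 := by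
    have h1 : 3 * (k / 2 : ℕ) ≤ 2 * k := by omega
    have h2 := congrArg (fun m : ℕ => (m : ℝ)) (rfl : 3 * (k/2 : ℕ) = 3 * (k/2 : ℕ))
    have h3 : ((3 * (k / 2 : ℕ) : ℕ) : ℝ) ≤ ((2 * k : ℕ) : ℝ) := Nat.cast_le.2 h1
    push_cast at h3
    linarith
  have hDreal : ((n : ℝ) - 1 - ((k / 2 : ℕ) : ℝ)) ≤ (diffIndex (hatKkk n k) : ℝ) := by
    rw [← hcast]
    exact_mod_cast hDval
  have hfirst : (n : ℝ) - 2 * k / 3 - 1 ≤ (diffIndex (hatKkk n k) : ℝ) := by linarith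
  refine ⟨hfirst, hSval, ?_⟩
  rw [hSval]
  have hcast2 : ((2 * n - 2 * k - 1 : ℕ) : ℝ) = 2 * (n : ℝ) - 2 * k - 1 := by
    have h1 : (2 * n - 2 * k - 1 : ℕ) + (2 * k + 1) = 2 * n := by omega
    have h2 := congrArg (fun m : ℕ => (m : ℝ)) h1
    push_cast at h2
    linarith
  have hceil : ⌈((2 * n - 2 * k - 1 : ℕ) : ℝ) / 2⌉ = (n : ℤ) - k := by
    rw [Int.ceil_eq_iff]
    rw [hcast2]
    constructor
    · push_cast
      linarith
    · push_cast
      linarith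
  rw [hceil]
  push_cast
  linarith
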